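/- Let P, Q ∈ GL⁺(H), let (Λ_w)_{w∈Ω} satisfy ∫_Ω ‖Λ_w P f‖² dμ(w) ≤ B_Λ‖f‖² for all f ∈ H and (Γ_w)_{w∈Ω} satisfy ∫_Ω ‖Γ_w Q f‖² dμ(w) ≤ B_Γ‖f‖² for all f ∈ H, and assume the duality relation ⟨f, g⟩ = ∫_Ω ⟨Λ_w P f, Γ_w Q g⟩ dμ(w) holds for all f, g ∈ H. Then for every f ∈ H, (1/B_Γ)·‖f‖² ≤ ∫_Ω ‖Λ_w P f‖² dμ(w) and (1/B_Λ)·‖f‖² ≤ ∫_Ω ‖Γ_w Q f‖² dμ(w); that is, (Λ_w) is a (P, P)-controlled continuous g-frame and (Γ_w) is a (Q, Q)-controlled continuous g-frame. -/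

import Mathlib

open MeasureTheory
open scoped ComplexInnerProductSpace

/-- Auxiliary: the norm squared of an L² element as an integral. -/
private lemma L2_norm_sq_eq {Ω L : Type*} [MeasurableSpace Ω] {μ : Measure Ω}
    [NormedAddCommGroup L] [InnerProductSpace ℂ L]
    {g : Ω → L} (hg : MemLp g 2 μ) :
    ‖hg.toLp g‖ ^ 2 = ∫ w, ‖g w‖ ^ 2 ∂μ := by
  have h1 : (‖hg.toLp g‖ : ℝ) ^ 2 = RCLike.re (⟪hg.toLp g, hg.toLp g⟫ : ℂ) :=
    ((@inner_self_eq_norm_sq ℂ _ _ _ _ (hg.toLp g))).symm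
  rw [h1, MeasureTheory.L2.inner_def]
  have h2 : (∫ w, (⟪(hg.toLp g : Ω →₂[μ] L) w, (hg.toLp g : Ω →₂[μ] L) w⟫ : ℂ) ∂μ)
      = ∫ w, (⟪g w, g w⟫ : ℂ) ∂μ := by
    refine integral_congr_ae ?_
    filter_upwards [hg.coeFn_toLp] with w hw
    rw [hw]
  rw [h2]
  have h3 : ∀ w, (⟪g w, g w⟫ : ℂ) = ((‖g w‖ ^ 2 : ℝ) : ℂ) := by
    intro w
    rw [inner_self_eq_norm_sq_to_K]
    norm_cast
  simp_rw [h3]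
  have h4 : (∫ w, ((‖g w‖ ^ 2 : ℝ) : ℂ) ∂μ) = ((∫ w, ‖g w‖ ^ 2 ∂μ : ℝ) : ℂ) :=
    integral_ofReal
  rw [h4]
  simp

private lemma lower_bound_aux {H : Type*} [NormedAddCommGroup H] [InnerProductSpace ℂ H]
    {f : H} {I J B : ℝ} (hI : 0 ≤ I) (hB : 0 < B)
    (hCS : ‖f‖ ^ 2 * ‖f‖ ^ 2 ≤ I * J) (hJ : J ≤ B * ‖f‖ ^ 2) :
    1 / B * ‖f‖ ^ 2 ≤ I := by
  rcases eq_or_ne f 0 with rfl | hf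
  · simpa using hI
  · have hfn : 0 < ‖f‖ ^ 2 := pow_pos (norm_pos_iff.mpr hf) 2
    have : ‖f‖ ^ 2 * ‖f‖ ^ 2 ≤ I * (B * ‖f‖ ^ 2) := by
      calc ‖f‖ ^ 2 * ‖f‖ ^ 2 ≤ I * J := hCS
        _ ≤ I * (B * ‖f‖ ^ 2) := by nlinarith
    rw [div_mul_eq_mul_div, div_le_iff₀ hB]
    nlinarith

/-- If the controlled duality relation holds, then `(Λ_w)` is a
`(P, P)`-controlled continuous g-frame with lower bound `1/B_Γ` and `(Γ_w)` is a
`(Q, Q)`-controlled continuous g-frame with lower bound `1/B_Λ`. -/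
theorem controlled_dual_implies_frames
    {H L Ω : Type*}
    [NormedAddCommGroup H] [InnerProductSpace ℂ H] [CompleteSpace H]
    [NormedAddCommGroup L] [InnerProductSpace ℂ L] [CompleteSpace L]
    [MeasurableSpace Ω] (μ : Measure Ω)
    (Λ Γ : Ω → H →L[ℂ] L)
    (hΛmeas : ∀ f : H, AEStronglyMeasurable (fun w => Λ w f) μ)
    (hΛint : ∀ f : H, Integrable (fun w => ‖Λ w f‖ ^ 2) μ)
    (hΓmeas : ∀ f : H, AEStronglyMeasurable (fun w => Γ w f) μ)
    (hΓint : ∀ f : H, Integrable (fun w => ‖Γ w f‖ ^ 2) μ)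
    -- P, Q ∈ GL⁺(H)
    (P Q Pinv Qinv : H →L[ℂ] H)
    (hP : P.IsPositive) (hPinv : P * Pinv = 1 ∧ Pinv * P = 1)
    (hQ : Q.IsPositive) (hQinv : Q * Qinv = 1 ∧ Qinv * Q = 1)
    -- controlled Bessel bounds
    (BΛ BΓ : ℝ) (hBΛ : 0 < BΛ) (hBΓ : 0 < BΓ)
    (hΛBessel : ∀ f : H, ∫ w, ‖Λ w (P f)‖ ^ 2 ∂μ ≤ BΛ * ‖f‖ ^ 2)
    (hΓBessel : ∀ f : H, ∫ w, ‖Γ w (Q f)‖ ^ 2 ∂μ ≤ BΓ * ‖f‖ ^ 2)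
    -- the controlled duality relation
    (hdual : ∀ f g : H, (⟪f, g⟫ : ℂ) = ∫ w, ⟪Λ w (P f), Γ w (Q g)⟫ ∂μ) :
    ∀ f : H,
      1 / BΓ * ‖f‖ ^ 2 ≤ ∫ w, ‖Λ w (P f)‖ ^ 2 ∂μ ∧
      1 / BΛ * ‖f‖ ^ 2 ≤ ∫ w, ‖Γ w (Q f)‖ ^ 2 ∂μ := by
  intro f
  -- Memℒp facts
  have hFm : MemLp (fun w => Λ w (P f)) 2 μ :=
    (memLp_two_iff_integrable_sq_norm (hΛmeas (P f))).mpr (hΛint (P f))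
  have hGm : MemLp (fun w => Γ w (Q f)) 2 μ :=
    (memLp_two_iff_integrable_sq_norm (hΓmeas (Q f))).mpr (hΓint (Q f))
  set F := hFm.toLp _ with hFdef
  set G := hGm.toLp _ with hGdef
  have hFnorm : ‖F‖ ^ 2 = ∫ w, ‖Λ w (P f)‖ ^ 2 ∂μ := L2_norm_sq_eq hFm
  have hGnorm : ‖G‖ ^ 2 = ∫ w, ‖Γ w (Q f)‖ ^ 2 ∂μ := L2_norm_sq_eq hGm
  have hInner : (⟪F, G⟫ : ℂ) = ⟪f, f⟫ := by
    rw [MeasureTheory.L2.inner_def, hdual f f]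
    refine integral_congr_ae ?_
    filter_upwards [hFm.coeFn_toLp, hGm.coeFn_toLp] with w h1 h2
    rw [hFdef, hGdef] at *
    rw [h1, h2]
  have hCS : ‖f‖ ^ 2 * ‖f‖ ^ 2 ≤ (∫ w, ‖Λ w (P f)‖ ^ 2 ∂μ) * ∫ w, ‖Γ w (Q f)‖ ^ 2 ∂μ := by
    have h1 : ‖(⟪F, G⟫ : ℂ)‖ ≤ ‖F‖ * ‖G‖ := norm_inner_le_norm F G
    have h2 : ‖(⟪f, f⟫ : ℂ)‖ = ‖f‖ ^ 2 := by
      rw [@inner_self_eq_norm_sq_to_K ℂ]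
      simp [sq_abs]
    rw [hInner, h2] at h1
    have := mul_le_mul h1 h1 (by positivity) (by positivity)
    calc ‖f‖ ^ 2 * ‖f‖ ^ 2 ≤ (‖F‖ * ‖G‖) * (‖F‖ * ‖G‖) := this
      _ = ‖F‖ ^ 2 * ‖G‖ ^ 2 := by ring
      _ = _ := by rw [hFnorm, hGnorm]
  have hIpos : 0 ≤ ∫ w, ‖Λ w (P f)‖ ^ 2 ∂μ :=
    integral_nonneg fun w => by positivity
  have hJpos : 0 ≤ ∫ w, ‖Γ w (Q f)‖ ^ 2 ∂μ :=
    integral_nonneg fun w => by positivity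
  constructor
  · exact lower_bound_aux hIpos hBΓ hCS (hΓBessel f)
  · exact lower_bound_aux hJpos hBΛ (by rw [mul_comm] at hCS; linarith [hCS]) (hΛBessel f)
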